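/- Let {P_α : α < κ} be a projectional sequence in a Banach space X and let D ⊆ X* be a norming linear subspace such that D = ⋃_{α<κ} P_α* D and (P_α X, P_α* D) is a Plichko pair for each α < κ. Assume moreover that each P_α* D is weak* countably tight (e.g. contained in a Σ-space). Then (X, D) is a Plichko pair. -/

import Mathlib

open NormedSpace

/-- The norm of the restriction of a functional `φ` to a subset `Y ⊆ X`. -/
noncomputable def restrNorm {X : Type*} [NormedAddCommGroup X] [NormedSpace ℝ X]
    (Y : Set X) (φ : X →L[ℝ] ℝ) : ℝ :=
  sSup {t : ℝ | ∃ y ∈ Y, ‖y‖ ≤ 1 ∧ t = |φ y|}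

/-- `(Y, E)` is a Plichko pair (for a subspace `Y ⊆ X` and a set of functionals
`E ⊆ X*`, acting on `Y` by restriction): the restrictions of `E` are norming for
`Y` and there is a linearly dense `A ⊆ Y` whose `E`-supports are countable. -/
def IsPlichkoPairOn {X : Type*} [NormedAddCommGroup X] [NormedSpace ℝ X]
    (Y : Set X) (E : Set (X →L[ℝ] ℝ)) : Prop :=
  (∃ c > (0:ℝ), ∀ y ∈ Y, c * ‖y‖ ≤
    sSup {t : ℝ | ∃ φ ∈ E, restrNorm Y φ ≠ 0 ∧ t = |φ y| / restrNorm Y φ}) ∧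
  ∃ A ⊆ Y, Y ⊆ closure (Submodule.span ℝ A : Set X) ∧
    ∀ φ ∈ E, {a ∈ A | φ a ≠ 0}.Countable

private lemma aux_nat_lt {θ : Ordinal} (hθ : Order.IsSuccLimit θ) {μ : Ordinal} (hμ : μ < θ) :
    ∀ n : ℕ, μ + n < θ := by
  intro n
  induction n with
  | zero => simpa using hμ
  | succ n ih =>
      have : μ + (n+1 : ℕ) = Order.succ (μ + n) := by
        push_cast
        rw [← add_assoc, Ordinal.add_one_eq_succ]
      rw [this]
      exact hθ.succ_lt ih

private lemma aux_add_omega_lt {θ : Ordinal} (hθ : Order.IsSuccLimit θ)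
    (hbdd : ∀ S : Set Ordinal, S ⊆ Set.Iio θ → S.Countable → ∃ β, β < θ ∧ ∀ ξ ∈ S, ξ ≤ β) :
    ∀ μ, μ < θ → μ + Ordinal.omega0 < θ := by
  intro μ hμ
  obtain ⟨β, hβθ, hβ⟩ := hbdd (Set.range fun n : ℕ => μ + n)
    (by rintro x ⟨n, rfl⟩; exact aux_nat_lt hθ hμ n) (Set.countable_range _)
  have : μ + Ordinal.omega0 ≤ β := by
    rw [Ordinal.add_le_iff_of_isSuccLimit Ordinal.isSuccLimit_omega0]
    intro b hb
    obtain ⟨n, rfl⟩ := Ordinal.lt_omega0.mp hb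
    exact hβ _ ⟨n, rfl⟩
  exact this.trans_lt hβθ

private lemma aux_bounded_of_not_cofinal {κ : Ordinal} (hκ : Order.IsSuccLimit κ)
    (h : ¬∃ c : ℕ → Ordinal, (∀ n, c n < κ) ∧ ∀ ξ, ξ < κ → ∃ n, ξ ≤ c n) :
    ∀ S : Set Ordinal, S ⊆ Set.Iio κ → S.Countable → ∃ β, β < κ ∧ ∀ ξ ∈ S, ξ ≤ β := by
  intro S hSsub hScnt
  rcases S.eq_empty_or_nonempty with rfl | hne
  · exact ⟨0, hκ.pos, by simp⟩
  by_contra hnb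
  push_neg at hnb
  obtain ⟨f, hf⟩ := hScnt.exists_eq_range hne
  refine h ⟨f, fun n => hSsub (by rw [hf]; exact ⟨n, rfl⟩), fun ξ hξ => ?_⟩
  obtain ⟨μ, hμS, hμ⟩ := hnb ξ hξ
  rw [hf] at hμS
  obtain ⟨n, rfl⟩ := hμS
  exact ⟨n, hμ.le⟩

/-- let `{P α : α < κ}` be a projectional sequence in `X` and let
`D ⊆ X*` be a norming linear subspace with `D = ⋃_{α<κ} P α* D`, such that each
`(P α X, P α* D)` is a Plichko pair and each `P α* D` is weak* countably tight.
Then `(X, D)` is a Plichko pair. -/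
theorem statement11 {X : Type*} [NormedAddCommGroup X] [NormedSpace ℝ X] [CompleteSpace X]
    (κ : Ordinal) (P : Ordinal → X →L[ℝ] X)
    (hseq : ∀ ξ η, ξ < η → η < κ →
      (P ξ).comp (P η) = P ξ ∧ (P η).comp (P ξ) = P ξ)
    (hlimit : ∀ δ, δ < κ → Order.IsSuccLimit δ →
      Set.range (P δ) = closure (⋃ ξ < δ, Set.range (P ξ)))
    (hcover : closure (⋃ ξ < κ, Set.range (P ξ)) = (Set.univ : Set X))
    (D : Submodule ℝ (X →L[ℝ] ℝ))
    (hnorming : ∃ c > (0:ℝ), ∀ x : X,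
      c * ‖x‖ ≤ sSup {t : ℝ | ∃ φ ∈ D, φ ≠ 0 ∧ t = |φ x| / ‖φ‖})
    (hDstable : ∀ α, α < κ → ∀ φ ∈ D, φ.comp (P α) ∈ D)
    (hDunion : ∀ φ ∈ D, ∃ α, α < κ ∧ φ.comp (P α) = φ)
    (hPlichko : ∀ α, α < κ →
      IsPlichkoPairOn (Set.range (P α)) {ψ | ∃ φ ∈ D, ψ = φ.comp (P α)})
    (htight : ∀ α, α < κ →
      ∀ A : Set (WeakDual ℝ X),
        A ⊆ StrongDual.toWeakDual '' {ψ | ∃ φ ∈ D, ψ = φ.comp (P α)} →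
      ∀ p ∈ StrongDual.toWeakDual '' {ψ | ∃ φ ∈ D, ψ = φ.comp (P α)},
        p ∈ closure A → ∃ A₀ ⊆ A, A₀.Countable ∧ p ∈ closure A₀) :
    ∃ A : Set X, closure (Submodule.span ℝ A : Set X) = Set.univ ∧
      ∀ φ ∈ D, {a ∈ A | φ a ≠ 0}.Countable := by
  classical
  -- choose the Plichko sets
  choose As hAsub hAdense hAcnt using fun α (h : α < κ) => (hPlichko α h).2
  -- range monotonicity
  have hYmono : ∀ ξ η, ξ < η → η < κ → Set.range (P ξ) ⊆ Set.range (P η) := by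
    intro ξ η h1 h2 x hx
    obtain ⟨y, rfl⟩ := hx
    exact ⟨P ξ y, by rw [← ContinuousLinearMap.comp_apply, (hseq ξ η h1 h2).2]⟩
  have hYmono' : ∀ ξ η, ξ ≤ η → η < κ → Set.range (P ξ) ⊆ Set.range (P η) := by
    intro ξ η h1 h2
    rcases h1.lt_or_eq with h | rfl
    · exact hYmono ξ η h h2
    · exact subset_rfl
  -- composition of functionals
  have hcompφ : ∀ (ψ : X →L[ℝ] ℝ) ξ η, ξ < η → η < κ →
      (ψ.comp (P ξ)).comp (P η) = ψ.comp (P ξ) := by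
    intro ψ ξ η h1 h2
    rw [ContinuousLinearMap.comp_assoc, (hseq ξ η h1 h2).1]
  -- idempotence at limit ordinals
  have hidem : ∀ μ, μ < κ → Order.IsSuccLimit μ → ∀ z ∈ Set.range (P μ), P μ z = z := by
    intro μ hμ hlim z hz
    have hcl : IsClosed {z : X | P μ z = z} := isClosed_eq (P μ).continuous continuous_id
    have hsub : (⋃ ξ < μ, Set.range (P ξ)) ⊆ {z : X | P μ z = z} := by
      intro z hz
      simp only [Set.mem_iUnion] at hz
      obtain ⟨ξ, hξ, y, rfl⟩ := hz
      show P μ (P ξ y) = P ξ y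
      rw [← ContinuousLinearMap.comp_apply, (hseq ξ μ hξ hμ).2]
    have := hlimit μ hμ hlim ▸ hz
    exact closure_minimal hsub hcl this
  -- main case split
  rcases Ordinal.zero_or_succ_or_isSuccLimit κ with rfl | ⟨β, rfl⟩ | hklim
  · -- κ = 0 : impossible
    exfalso
    have : (⋃ ξ < (0:Ordinal), Set.range (P ξ)) = (∅ : Set X) := by
      simp [not_lt_zero]
    rw [this, closure_empty] at hcover
    exact absurd (hcover ▸ Set.mem_univ (0:X)) (by simp)
  · -- κ = succ β
    have hβ : β < Order.succ β := Order.lt_succ β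
    refine ⟨As β hβ, ?_, ?_⟩
    · -- density
      apply Set.eq_univ_of_univ_subset
      rw [← hcover]
      refine closure_minimal (Set.iUnion₂_subset fun ξ hξ => ?_) isClosed_closure
      exact (hYmono' ξ β (Order.lt_succ_iff.mp hξ) hβ).trans (hAdense β hβ)
    · -- countable supports
      intro φ hφ
      obtain ⟨γ, hγ, hγfix⟩ := hDunion φ hφ
      have hfix : φ.comp (P β) = φ := by
        rcases (Order.lt_succ_iff.mp hγ).lt_or_eq with h | rfl
        · rw [← hγfix, hcompφ φ γ β h hβ]
        · exact hγfix
      have := hAcnt β hβ (φ.comp (P β)) ⟨φ, hφ, rfl⟩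
      rw [hfix] at this
      exact this
  · -- κ limit
    by_cases hcof : ∃ c : ℕ → Ordinal, (∀ n, c n < κ) ∧ ∀ ξ, ξ < κ → ∃ n, ξ ≤ c n
    · obtain ⟨c, hc1, hc2⟩ := hcof
      have hd : ∀ n : ℕ, Order.succ (c n) < κ := fun n => hklim.succ_lt (hc1 n)
      have hcd : ∀ n : ℕ, c n < Order.succ (c n) := fun n => Order.lt_succ _
      set A : Set X := ⋃ n : ℕ, (P (c n)) '' (As (Order.succ (c n)) (hd n)) with hA
      have himg : ∀ (Q : X →L[ℝ] X) (s B : Set X), Q '' s ⊆ B →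
          Q '' closure (Submodule.span ℝ s : Set X) ⊆ closure (Submodule.span ℝ B : Set X) := by
        intro Q s B hQB
        refine (image_closure_subset_closure_image Q.continuous).trans (closure_mono ?_)
        have h1 : Q '' (Submodule.span ℝ s : Set X) = (Submodule.span ℝ (Q '' s) : Set X) := by
          have := Submodule.map_span (Q : X →ₗ[ℝ] X) s
          have h2 := congrArg (fun p : Submodule ℝ X => (p : Set X)) this
          simpa [Submodule.map_coe] using h2
        rw [h1]
        exact Submodule.span_mono hQB
      have hAinS : ∀ n : ℕ, Set.range (P (c n)) ⊆ closure (Submodule.span ℝ A : Set X) := by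
        intro n x hx
        obtain ⟨y, rfl⟩ := hx
        have h1 : P (c n) y = P (c n) (P (Order.succ (c n)) y) := by
          conv_lhs => rw [← (hseq (c n) (Order.succ (c n)) (hcd n) (hd n)).1]
          rfl
        rw [h1]
        refine himg (P (c n)) (As (Order.succ (c n)) (hd n)) A
          (Set.subset_iUnion (fun m : ℕ => (P (c m)) '' (As (Order.succ (c m)) (hd m))) n)
          ⟨_, hAdense _ (hd n) (Set.mem_range_self _), rfl⟩
      refine ⟨A, ?_, ?_⟩
      · apply Set.eq_univ_of_univ_subset
        rw [← hcover]
        refine closure_minimal (Set.iUnion₂_subset fun ξ hξ => ?_) isClosed_closure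
        obtain ⟨n, hn⟩ := hc2 ξ hξ
        exact (hYmono' ξ (c n) hn (hc1 n)).trans (hAinS n)
      · intro φ hφ
        have hsub : {a ∈ A | φ a ≠ 0} ⊆
            ⋃ n : ℕ, (P (c n)) '' {a ∈ As (Order.succ (c n)) (hd n) |
              (φ.comp (P (c n))) a ≠ 0} := by
          rintro x ⟨hxA, hx0⟩
          rw [hA, Set.mem_iUnion] at hxA
          obtain ⟨n, a, haA, rfl⟩ := hxA
          exact Set.mem_iUnion.mpr ⟨n, ⟨a, ⟨haA, by simpa using hx0⟩, rfl⟩⟩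
        refine Set.Countable.mono hsub (Set.countable_iUnion fun n => Set.Countable.image ?_ _)
        have hψ : φ.comp (P (c n)) = (φ.comp (P (c n))).comp (P (Order.succ (c n))) :=
          (hcompφ φ _ _ (hcd n) (hd n)).symm
        have hc := hAcnt (Order.succ (c n)) (hd n) ((φ.comp (P (c n))).comp (P (Order.succ (c n))))
          ⟨φ.comp (P (c n)), hDstable (c n) (hc1 n) φ hφ, rfl⟩
        rw [← hψ] at hc
        exact hc

    · -- limit κ, every countable subset of Iio κ is bounded
      have hbdd := aux_bounded_of_not_cofinal hklim hcof
      have haddω : ∀ μ, μ < κ → μ + Ordinal.omega0 < κ := aux_add_omega_lt hklim hbdd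
      have hω : Ordinal.omega0 < κ := by simpa using haddω 0 hklim.pos
      have hωlim : ∀ μ : Ordinal, Order.IsSuccLimit (μ + Ordinal.omega0) :=
        fun μ => Ordinal.isSuccLimit_add μ Ordinal.isSuccLimit_omega0
      have hltadd : ∀ μ : Ordinal, μ < μ + Ordinal.omega0 := fun μ => by
        simpa using (add_lt_add_iff_left μ).mpr Ordinal.omega0_pos
      -- the pieces
      set Bset : Ordinal → Set X := fun μ =>
        if h : μ < κ then (fun a => a - P μ a) '' As (μ + Ordinal.omega0) (haddω μ h) else ∅
        with hBset
      set A : Set X := As Ordinal.omega0 hω ∪ ⋃ μ : Ordinal, Bset μ with hA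
      -- KEY LEMMA: the set of "bad" ordinals for φ ∈ D is countable (uses htight)
      have hBadcnt : ∀ φ, φ ∈ D →
          {μ : Ordinal | μ < κ ∧ φ.comp (P (μ + Ordinal.omega0)) ≠ φ.comp (P μ)}.Countable := by
        intro φ hφ
        by_contra hunc
        set Bad := {μ : Ordinal | μ < κ ∧ φ.comp (P (μ + Ordinal.omega0)) ≠ φ.comp (P μ)}
          with hBadDef
        obtain ⟨γ, hγκ, hγfix⟩ := hDunion φ hφ
        have hfixup : ∀ δ, γ < δ → δ < κ → φ.comp (P δ) = φ := by
          intro δ h1 h2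
          conv_lhs => rw [← hγfix]
          rw [hcompφ φ γ δ h1 h2, hγfix]
        have hBadsub : Bad ⊆ Set.Iio (γ + 1) := by
          intro μ hμ
          by_contra hc
          have hγμ : γ < μ := by
            have h' : γ + 1 ≤ μ := not_lt.mp (by simpa using hc)
            rw [Ordinal.add_one_eq_succ, Order.succ_le_iff] at h'
            exact h'
          exact hμ.2 (by
            rw [hfixup μ hγμ hμ.1, hfixup (μ + Ordinal.omega0) (hγμ.trans (hltadd μ)) (haddω μ hμ.1)])
        have hγ1κ : γ + 1 < κ := by
          rw [Ordinal.add_one_eq_succ]; exact hklim.succ_lt hγκ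
        obtain ⟨ν, hνmem, hνmin⟩ := Ordinal.lt_wf.has_min
          {ν : Ordinal | ¬(Bad ∩ Set.Iio ν).Countable}
          ⟨γ + 1, by
            show ¬(Bad ∩ Set.Iio (γ + 1)).Countable
            rwa [Set.inter_eq_self_of_subset_left hBadsub]⟩
        have hcnt' : ∀ β, β < ν → (Bad ∩ Set.Iio β).Countable := by
          intro β hβ; by_contra h; exact hνmin β h hβ
        have hνle : ν ≤ γ + 1 := not_lt.mp
          (fun h => hνmin (γ + 1) (by
            show ¬(Bad ∩ Set.Iio (γ + 1)).Countable
            rwa [Set.inter_eq_self_of_subset_left hBadsub]) h)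
        have hνκ : ν < κ := hνle.trans_lt hγ1κ
        have hνlim : Order.IsSuccLimit ν := by
          rcases Ordinal.zero_or_succ_or_isSuccLimit ν with rfl | ⟨ρ, rfl⟩ | h
          · refine absurd ?_ hνmem
            have he : Bad ∩ Set.Iio (0:Ordinal) = ∅ := by
              ext μ; simp [not_lt_zero]
            rw [he]
            exact Set.countable_empty
          · refine absurd (Set.Countable.mono ?_
              ((hcnt' ρ (Order.lt_succ ρ)).union (Set.countable_singleton ρ))) hνmem
            rintro μ ⟨h1, h2⟩
            rcases (Order.lt_succ_iff.mp (Set.mem_Iio.mp h2)).lt_or_eq with h | rfl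
            · exact Or.inl ⟨h1, h⟩
            · exact Or.inr rfl
          · exact h
        have hνbdd : ∀ S : Set Ordinal, S ⊆ Set.Iio ν → S.Countable →
            ∃ β, β < ν ∧ ∀ ξ ∈ S, ξ ≤ β := by
          intro S hS hSc
          by_contra hnb
          push_neg at hnb
          refine hνmem (Set.Countable.mono ?_
            (Set.Countable.biUnion hSc (fun ξ hξ => hcnt' ξ (hS hξ))))
          rintro μ ⟨h1, h2⟩
          obtain ⟨ξ, hξS, hlt⟩ := hnb μ h2
          exact Set.mem_biUnion hξS ⟨h1, hlt⟩
        have hνaddω : ∀ μ, μ < ν → μ + Ordinal.omega0 < ν := aux_add_omega_lt hνlim hνbdd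
        have hνunb : ∀ β, β < ν → ∃ μ, μ ∈ Bad ∧ β ≤ μ ∧ μ < ν := by
          intro β hβ
          by_contra hn; push_neg at hn
          refine hνmem (Set.Countable.mono ?_ (hcnt' β hβ))
          rintro μ ⟨h1, h2⟩
          rcases lt_or_ge μ β with h | h
          · exact ⟨h1, h⟩
          · exact absurd (Set.mem_Iio.mp h2) (not_lt.mpr (hn μ h1 h))
        -- the range of P ν is the (closed) union of earlier ranges
        have hYν : ∀ z ∈ Set.range (P ν), ∃ ξ, ξ < ν ∧ z ∈ Set.range (P ξ) := by
          intro z hz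
          rw [hlimit ν hνκ hνlim] at hz
          have happ : ∀ n : ℕ, ∃ u ∈ (⋃ ξ < ν, Set.range (P ξ)),
              dist z u < (1:ℝ)/((n:ℝ)+1) := by
            intro n
            exact Metric.mem_closure_iff.mp hz _ (by positivity)
          choose u hu hud using happ
          have humem : ∀ n : ℕ, ∃ ξ, ξ < ν ∧ u n ∈ Set.range (P ξ) := by
            intro n
            have := hu n
            simp only [Set.mem_iUnion] at this
            obtain ⟨ξ, h1, h2⟩ := this
            exact ⟨ξ, h1, h2⟩
          choose ξu hξu1 hξu2 using humem
          obtain ⟨β, hβν, hβ⟩ := hνbdd (Set.range ξu)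
            (by rintro _ ⟨n, rfl⟩; exact hξu1 n) (Set.countable_range _)
          have hℓν : β + Ordinal.omega0 < ν := hνaddω β hβν
          have hℓκ : β + Ordinal.omega0 < κ := hℓν.trans hνκ
          have hYℓclosed : IsClosed (Set.range (P (β + Ordinal.omega0))) := by
            rw [hlimit _ hℓκ (hωlim β)]; exact isClosed_closure
          have hzℓ : z ∈ Set.range (P (β + Ordinal.omega0)) := by
            rw [← hYℓclosed.closure_eq, Metric.mem_closure_iff]
            intro ε hε
            obtain ⟨n, hn⟩ := exists_nat_one_div_lt hε
            refine ⟨u n, ?_, lt_trans (hud n) (by exact_mod_cast hn)⟩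
            exact hYmono (ξu n) _ ((hβ _ ⟨n, rfl⟩).trans_lt (hltadd β)) hℓκ (hξu2 n)
          exact ⟨β + Ordinal.omega0, hℓν, hzℓ⟩
        -- eventual constancy of P δ x as δ → ν
        have hev : ∀ x : X, ∃ ξ, ξ < ν ∧ ∀ δ, ξ < δ → δ < ν → P δ x = P ν x := by
          intro x
          obtain ⟨ξ, hξν, hmem⟩ := hYν (P ν x) (Set.mem_range_self x)
          refine ⟨ξ, hξν, fun δ h1 h2 => ?_⟩
          obtain ⟨y, hy⟩ := hmem
          have e1 : P δ x = P δ (P ν x) := by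
            conv_lhs => rw [← (hseq δ ν h2 hνκ).1]
            rfl
          rw [e1, ← hy, ← ContinuousLinearMap.comp_apply, (hseq ξ δ h1 (h2.trans hνκ)).2, hy]
        choose ξf hξf1 hξf2 using hev
        -- a selection of bad ordinals above any finite set of thresholds
        have hsel : ∀ s : Finset X, ∃ μ, μ ∈ Bad ∧ (∀ x ∈ s, ξf x < μ) ∧ μ < ν := by
          intro s
          have hsup : s.sup ξf < ν := (Finset.sup_lt_iff hνlim.pos).mpr (fun x _ => hξf1 x)
          have hsup1 : s.sup ξf + 1 < ν := by
            rw [Ordinal.add_one_eq_succ]; exact hνlim.succ_lt hsup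
          obtain ⟨μ, hμBad, hμge, hμν⟩ := hνunb (s.sup ξf + 1) hsup1
          refine ⟨μ, hμBad, fun x hx => lt_of_le_of_lt (Finset.le_sup hx) ?_, hμν⟩
          calc s.sup ξf < s.sup ξf + 1 := by
                rw [Ordinal.add_one_eq_succ]; exact Order.lt_succ _
          _ ≤ μ := hμge
        choose μsel hμsel1 hμsel2 hμsel3 using hsel
        set p : WeakDual ℝ X := StrongDual.toWeakDual (φ.comp (P ν)) with hpdef
        set A' : Set (WeakDual ℝ X) :=
          StrongDual.toWeakDual '' {ψ | ∃ μ, (μ ∈ Bad ∧ μ < ν) ∧ ψ = φ.comp (P μ)} with hA'def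
        have htend : Filter.Tendsto (fun s : Finset X => StrongDual.toWeakDual (φ.comp (P (μsel s))))
            Filter.atTop (nhds p) := by
          rw [tendsto_iff_forall_eval_tendsto_topDualPairing]
          intro x
          refine Filter.Tendsto.congr' ?_ tendsto_const_nhds
          refine Filter.eventually_atTop.mpr ⟨{x}, fun s hs => ?_⟩
          have hxs : x ∈ s := hs (Finset.mem_singleton_self x)
          have heq := hξf2 x (μsel s) (hμsel2 s x hxs) (hμsel3 s)
          show φ (P ν x) = φ (P (μsel s) x)
          rw [heq]
        have hpclos : p ∈ closure A' := mem_closure_of_tendsto htend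
          (Filter.Eventually.of_forall
            (fun s => ⟨φ.comp (P (μsel s)), ⟨μsel s, ⟨hμsel1 s, hμsel3 s⟩, rfl⟩, rfl⟩))
        have hA'sub : A' ⊆ StrongDual.toWeakDual '' {ψ | ∃ φ' ∈ D, ψ = φ'.comp (P ν)} := by
          rintro q ⟨ψ, ⟨μ, ⟨hμBad, hμν⟩, rfl⟩, rfl⟩
          exact ⟨φ.comp (P μ), ⟨φ.comp (P μ), hDstable μ hμBad.1 φ hφ,
            (hcompφ φ μ ν hμν hνκ).symm⟩, rfl⟩
        obtain ⟨A₀, hA₀sub, hA₀cnt, hpA₀⟩ := htight ν hνκ A' hA'sub p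
          ⟨φ.comp (P ν), ⟨φ, hφ, rfl⟩, rfl⟩ hpclos
        have hqex : ∀ q ∈ A₀, ∃ μ, (μ ∈ Bad ∧ μ < ν) ∧ q = StrongDual.toWeakDual (φ.comp (P μ)) := by
          intro q hq
          obtain ⟨ψ, ⟨μ, hμ, rfl⟩, rfl⟩ := hA₀sub hq
          exact ⟨μ, hμ, rfl⟩
        set m : WeakDual ℝ X → Ordinal :=
          fun q => if h : q ∈ A₀ then (hqex q h).choose else 0 with hm
        have hmspec : ∀ q (h : q ∈ A₀),
            (m q ∈ Bad ∧ m q < ν) ∧ q = StrongDual.toWeakDual (φ.comp (P (m q))) := by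
          intro q h
          have : m q = (hqex q h).choose := by rw [hm]; simp only [dif_pos h]
          rw [this]
          exact (hqex q h).choose_spec
        obtain ⟨β, hβν, hβbd⟩ := hνbdd (m '' A₀)
          (by rintro _ ⟨q, hq, rfl⟩; exact (hmspec q hq).1.2) (hA₀cnt.image m)
        have hβ'ν : β + 1 < ν := by
          rw [Ordinal.add_one_eq_succ]; exact hνlim.succ_lt hβν
        have hβ'κ : β + 1 < κ := hβ'ν.trans hνκ
        have hCclosed : IsClosed {q : WeakDual ℝ X | ∀ x : X, q (P (β + 1) x) = q x} := by
          have : {q : WeakDual ℝ X | ∀ x : X, q (P (β + 1) x) = q x} =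
              ⋂ x : X, {q : WeakDual ℝ X | q (P (β + 1) x) = q x} := by
            ext q; simp
          rw [this]
          exact isClosed_iInter fun x =>
            isClosed_eq (WeakDual.eval_continuous _) (WeakDual.eval_continuous _)
        have hA₀C : A₀ ⊆ {q : WeakDual ℝ X | ∀ x : X, q (P (β + 1) x) = q x} := by
          intro q hq x
          obtain ⟨⟨hmB, hmν⟩, hqe⟩ := hmspec q hq
          have hmβ : m q < β + 1 := by
            have h1 : m q ≤ β := hβbd _ ⟨q, hq, rfl⟩
            have h2 : β < β + 1 := by
              rw [Ordinal.add_one_eq_succ]; exact Order.lt_succ β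
            exact h1.trans_lt h2
          rw [hqe]
          show (φ.comp (P (m q))) (P (β + 1) x) = (φ.comp (P (m q))) x
          rw [← ContinuousLinearMap.comp_apply, hcompφ φ (m q) (β + 1) hmβ hβ'κ]
        have hpc : ∀ x : X, p (P (β + 1) x) = p x :=
          (hCclosed.closure_subset_iff.mpr hA₀C) hpA₀
        have hβν' : φ.comp (P (β + 1)) = φ.comp (P ν) := by
          ext x
          have h1 : φ (P ν (P (β + 1) x)) = φ (P ν x) := hpc x
          have h2 : P ν (P (β + 1) x) = P (β + 1) x := by
            rw [← ContinuousLinearMap.comp_apply, (hseq (β + 1) ν hβ'ν hνκ).2]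
          rw [h2] at h1
          exact h1
        have hfixint : ∀ δ, β + 1 ≤ δ → δ < ν → φ.comp (P δ) = φ.comp (P (β + 1)) := by
          intro δ h1 h2
          rcases h1.lt_or_eq with h | h
          · have e1 : φ.comp (P δ) = (φ.comp (P ν)).comp (P δ) := by
              rw [ContinuousLinearMap.comp_assoc, (hseq δ ν h2 hνκ).2]
            rw [e1, ← hβν', ContinuousLinearMap.comp_assoc, (hseq (β + 1) δ h (h2.trans hνκ)).1]
          · rw [← h]
        obtain ⟨μ, hμBad, hβμ, hμν⟩ := hνunb (β + 1) hβ'ν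
        have h1 : φ.comp (P μ) = φ.comp (P (β + 1)) := hfixint μ hβμ hμν
        have h2 : φ.comp (P (μ + Ordinal.omega0)) = φ.comp (P (β + 1)) :=
          hfixint _ (hβμ.trans (le_of_lt (hltadd μ))) (hνaddω μ hμν)
        exact hμBad.2 (h2.trans h1.symm)
      -- now build the answer
      refine ⟨A, ?_, ?_⟩
      · -- density via transfinite induction
        set S := (Submodule.span ℝ A).topologicalClosure with hSdef
        have hAS : A ⊆ (S : Set X) := fun a ha =>
          Submodule.le_topologicalClosure _ (Submodule.subset_span ha)
        have hclosS : ∀ B : Set X, B ⊆ (S : Set X) →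
            closure (Submodule.span ℝ B : Set X) ⊆ (S : Set X) := by
          intro B hB
          have h1 : (Submodule.span ℝ B : Set X) ⊆ (S : Set X) := Submodule.span_le.mpr hB
          exact closure_minimal h1 (Submodule.isClosed_topologicalClosure _)
        have hCL : ∀ μ, μ < κ → Set.range (P μ) ⊆ (S : Set X) := by
          intro μ
          induction μ using Ordinal.induction with
          | _ j IH =>
            intro hj
            rcases Ordinal.zero_or_succ_or_isSuccLimit j with rfl | ⟨ρ, rfl⟩ | hlim
            · refine (hYmono 0 Ordinal.omega0 Ordinal.omega0_pos hω).trans ?_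
              refine (hAdense Ordinal.omega0 hω).trans (hclosS _ ?_)
              exact fun a ha => hAS (Or.inl ha)
            · have hρj : ρ < Order.succ ρ := Order.lt_succ ρ
              have hρκ : ρ < κ := hρj.trans hj
              have hρω : ρ + Ordinal.omega0 < κ := haddω ρ hρκ
              have hsub1 : Set.range (P (Order.succ ρ)) ⊆ Set.range (P (ρ + Ordinal.omega0)) := by
                refine hYmono _ _ ?_ hρω
                rw [← Ordinal.add_one_eq_succ]
                exact (add_lt_add_iff_left ρ).mpr Ordinal.one_lt_omega0
              refine hsub1.trans ((hAdense _ hρω).trans (hclosS _ ?_))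
              intro a ha
              have h1 : a - P ρ a ∈ (S : Set X) := by
                refine hAS (Or.inr (Set.mem_iUnion.mpr ⟨ρ, ?_⟩))
                rw [hBset]
                simp only [dif_pos hρκ]
                exact ⟨a, ha, rfl⟩
              have h2 : P ρ a ∈ (S : Set X) := IH ρ hρj hρκ (Set.mem_range_self a)
              have h3 := S.add_mem h1 h2
              simpa using h3
            · rw [hlimit j hj hlim]
              refine closure_minimal (Set.iUnion₂_subset fun ξ hξ => IH ξ hξ (hξ.trans hj))
                (Submodule.isClosed_topologicalClosure _)
        apply Set.eq_univ_of_univ_subset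
        have h1 : (Set.univ : Set X) ⊆ (S : Set X) := by
          rw [← hcover]
          exact closure_minimal (Set.iUnion₂_subset fun ξ hξ => hCL ξ hξ)
            (Submodule.isClosed_topologicalClosure _)
        have h2 : (S : Set X) = closure (Submodule.span ℝ A : Set X) :=
          Submodule.topologicalClosure_coe _
        rw [← h2]
        exact h1
      · -- countable supports
        intro φ hφ
        have hBad := hBadcnt φ hφ
        have hpiece : ∀ (μ : Ordinal), μ < κ → {b ∈ Bset μ | φ b ≠ 0}.Countable := by
          intro μ h
          have hc1 := hAcnt (μ + Ordinal.omega0) (haddω μ h)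
            (φ.comp (P (μ + Ordinal.omega0))) ⟨φ, hφ, rfl⟩
          have hc2 := hAcnt (μ + Ordinal.omega0) (haddω μ h)
            ((φ.comp (P μ)).comp (P (μ + Ordinal.omega0)))
            ⟨φ.comp (P μ), hDstable μ h φ hφ, rfl⟩
          refine Set.Countable.mono ?_ (Set.Countable.image (hc1.union hc2) (fun a => a - P μ a))
          rintro b ⟨hbB, hb0⟩
          rw [hBset] at hbB
          simp only [dif_pos h] at hbB
          obtain ⟨a, ha, rfl⟩ := hbB
          refine ⟨a, ?_, rfl⟩
          have hidA : P (μ + Ordinal.omega0) a = a :=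
            hidem _ (haddω μ h) (hωlim μ) a (hAsub _ (haddω μ h) ha)
          have e1 : (φ.comp (P (μ + Ordinal.omega0))) a = φ a := by
            rw [ContinuousLinearMap.comp_apply, hidA]
          have e2 : ((φ.comp (P μ)).comp (P (μ + Ordinal.omega0))) a = φ (P μ a) := by
            rw [ContinuousLinearMap.comp_apply, hidA, ContinuousLinearMap.comp_apply]
          have hval : φ (a - P μ a) = (φ.comp (P (μ + Ordinal.omega0))) a -
              ((φ.comp (P μ)).comp (P (μ + Ordinal.omega0))) a := by
            rw [e1, e2, map_sub]
          rcases ne_or_eq ((φ.comp (P (μ + Ordinal.omega0))) a) 0 with h1 | h1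
          · exact Or.inl ⟨ha, h1⟩
          · refine Or.inr ⟨ha, fun h2 => hb0 ?_⟩
            rw [hval, h1, h2, sub_zero]
        have hgood : ∀ (μ : Ordinal), μ < κ →
            φ.comp (P (μ + Ordinal.omega0)) = φ.comp (P μ) →
            ∀ b ∈ Bset μ, φ b = 0 := by
          intro μ h heq b hb
          rw [hBset] at hb
          simp only [dif_pos h] at hb
          obtain ⟨a, ha, rfl⟩ := hb
          have hidA : P (μ + Ordinal.omega0) a = a :=
            hidem _ (haddω μ h) (hωlim μ) a (hAsub _ (haddω μ h) ha)
          have e3 : φ a = φ (P μ a) := by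
            conv_lhs => rw [← hidA]
            exact DFunLike.congr_fun heq a
          rw [map_sub, e3, sub_self]
        have hωsupp : {a ∈ As Ordinal.omega0 hω | φ a ≠ 0}.Countable := by
          refine Set.Countable.mono ?_
            (hAcnt Ordinal.omega0 hω (φ.comp (P Ordinal.omega0)) ⟨φ, hφ, rfl⟩)
          rintro a ⟨ha, ha0⟩
          refine ⟨ha, ?_⟩
          have : P Ordinal.omega0 a = a :=
            hidem _ hω Ordinal.isSuccLimit_omega0 a (hAsub _ hω ha)
          rw [ContinuousLinearMap.comp_apply, this]
          exact ha0
        have hsubT : {a ∈ A | φ a ≠ 0} ⊆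
            {a ∈ As Ordinal.omega0 hω | φ a ≠ 0} ∪
            ⋃ μ ∈ {μ : Ordinal | μ < κ ∧ φ.comp (P (μ + Ordinal.omega0)) ≠ φ.comp (P μ)},
              {b ∈ Bset μ | φ b ≠ 0} := by
          rintro x ⟨hxA, hx0⟩
          rcases hxA with hx | hx
          · exact Or.inl ⟨hx, hx0⟩
          · obtain ⟨μ, hxμ⟩ := Set.mem_iUnion.mp hx
            by_cases hμκ : μ < κ
            · by_cases hgd : φ.comp (P (μ + Ordinal.omega0)) = φ.comp (P μ)
              · exact absurd (hgood μ hμκ hgd x hxμ) hx0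
              · exact Or.inr (Set.mem_biUnion ⟨hμκ, hgd⟩ ⟨hxμ, hx0⟩)
            · rw [hBset] at hxμ
              simp only [dif_neg hμκ] at hxμ
              exact absurd hxμ (Set.notMem_empty x)
        refine Set.Countable.mono hsubT (hωsupp.union ?_)
        exact Set.Countable.biUnion hBad (fun μ hμ => hpiece μ hμ.1)
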